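/- Let g : [0,∞) → [0,∞) be nondecreasing with g(0) = 0, g of class C¹ on (0,∞), and suppose there exists p > 1 with t g'(t) ≥ (p − 1) g(t) for all t > 0. Fix τ₀ ≥ 0. Then the function h : (0,∞) → ℝ defined by h(τ) = g(|τ − τ₀|)·sign(τ − τ₀) / τ^{p−1} (with h(τ₀) = 0 if τ₀ > 0) is nondecreasing on (0,∞). -/

import Mathlib

open MeasureTheory Filter Set

noncomputable section

/-- let `g : [0,∞) → [0,∞)` be nondecreasing with `g 0 = 0`, of class `C¹`
on `(0,∞)` (derivative `g'`), and suppose `t g'(t) ≥ (p − 1) g(t)` for all `t > 0` with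
`p > 1`. Then for every fixed `τ₀ ≥ 0`, the function
`τ ↦ g(|τ − τ₀|) · sign(τ − τ₀) / τ^{p−1}` is nondecreasing on `(0,∞)`
(note `sign 0 = 0`, so the value at `τ = τ₀` is `0`). -/
theorem sign_quotient_monotone
    (g g' : ℝ → ℝ) (p τ₀ : ℝ)
    (hg0 : g 0 = 0)
    (hgnonneg : ∀ t : ℝ, 0 ≤ t → 0 ≤ g t)
    (hgmono : MonotoneOn g (Set.Ici 0))
    (hgg' : ∀ t : ℝ, 0 < t → HasDerivAt g (g' t) t)
    (hg'cont : ContinuousOn g' (Set.Ioi 0))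
    (hp : 1 < p)
    (hineq : ∀ t : ℝ, 0 < t → (p - 1) * g t ≤ t * g' t)
    (hτ₀ : 0 ≤ τ₀) :
    MonotoneOn (fun τ : ℝ => g |τ - τ₀| * Real.sign (τ - τ₀) / τ ^ (p - 1))
      (Set.Ioi 0) := by
  -- derivative facts on (τ₀, ∞)
  have hDeriv : ∀ x ∈ Set.Ioi τ₀,
      HasDerivAt (fun τ : ℝ => g (τ - τ₀) / τ ^ (p - 1))
        ((g' (x - τ₀) * x ^ (p - 1) - g (x - τ₀) * ((p - 1) * x ^ (p - 1 - 1)))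
          / (x ^ (p - 1)) ^ 2) x := by
    intro x hx
    have hx0 : (0:ℝ) < x := lt_of_le_of_lt hτ₀ hx
    have hu : (0:ℝ) < x - τ₀ := sub_pos.mpr hx
    have h1 : HasDerivAt (fun τ : ℝ => g (τ - τ₀)) (g' (x - τ₀)) x := by
      have := (hgg' (x - τ₀) hu).comp x ((hasDerivAt_id x).sub_const τ₀)
      rw [mul_one] at this
      exact this
    have h2 : HasDerivAt (fun τ : ℝ => τ ^ (p - 1)) ((p - 1) * x ^ (p - 1 - 1)) x :=
      Real.hasDerivAt_rpow_const (Or.inl (ne_of_gt hx0))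
    exact h1.div h2 (ne_of_gt (Real.rpow_pos_of_pos hx0 _))
  have hg'nonneg : ∀ t : ℝ, 0 < t → 0 ≤ g' t := by
    intro t ht
    nlinarith [hineq t ht, hgnonneg t ht.le]
  have key : MonotoneOn (fun τ : ℝ => g (τ - τ₀) / τ ^ (p - 1)) (Set.Ioi τ₀) := by
    apply monotoneOn_of_deriv_nonneg (convex_Ioi τ₀)
    · exact fun x hx => ((hDeriv x hx).continuousAt).continuousWithinAt
    · rw [interior_Ioi]
      exact fun x hx => ((hDeriv x hx).differentiableAt).differentiableWithinAt
    · rw [interior_Ioi]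
      intro x hx
      rw [(hDeriv x hx).deriv]
      have hx0 : (0:ℝ) < x := lt_of_le_of_lt hτ₀ hx
      have hu : (0:ℝ) < x - τ₀ := sub_pos.mpr hx
      apply div_nonneg _ (sq_nonneg _)
      have hx2 : (0:ℝ) < x ^ (p - 1 - 1) := Real.rpow_pos_of_pos hx0 _
      have hxx : x * x ^ (p - 1 - 1) = x ^ (p - 1) := by
        rw [Real.rpow_sub hx0, Real.rpow_one]
        field_simp
      have h4 : (p - 1) * g (x - τ₀) * x ^ (p - 1 - 1)
          ≤ (x - τ₀) * g' (x - τ₀) * x ^ (p - 1 - 1) :=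
        mul_le_mul_of_nonneg_right (hineq _ hu) hx2.le
      have h5 : (x - τ₀) * g' (x - τ₀) ≤ x * g' (x - τ₀) :=
        mul_le_mul_of_nonneg_right (by linarith) (hg'nonneg _ hu)
      have h6 := mul_le_mul_of_nonneg_right h5 hx2.le
      rw [← hxx]
      nlinarith
  intro a ha b hb hab
  simp only [Set.mem_Ioi] at ha hb
  simp only
  by_cases hbτ : b ≤ τ₀
  · -- both on the left of τ₀
    have haτ : a ≤ τ₀ := le_trans hab hbτ
    have hfa : g |a - τ₀| * Real.sign (a - τ₀) / a ^ (p - 1)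
        = -(g (τ₀ - a) / a ^ (p - 1)) := by
      rcases eq_or_lt_of_le haτ with h | h
      · simp [h, hg0]
      · rw [abs_of_neg (by linarith), Real.sign_of_neg (by linarith)]
        ring_nf
    have hfb : g |b - τ₀| * Real.sign (b - τ₀) / b ^ (p - 1)
        = -(g (τ₀ - b) / b ^ (p - 1)) := by
      rcases eq_or_lt_of_le hbτ with h | h
      · simp [h, hg0]
      · rw [abs_of_neg (by linarith), Real.sign_of_neg (by linarith)]
        ring_nf
    rw [hfa, hfb, neg_le_neg_iff]
    apply div_le_div₀ (hgnonneg _ (by linarith))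
    · exact hgmono (by simp; linarith) (by simp; linarith) (by linarith)
    · exact Real.rpow_pos_of_pos ha _
    · exact Real.rpow_le_rpow ha.le hab (by linarith)
  · push_neg at hbτ
    have hbval : g |b - τ₀| * Real.sign (b - τ₀) / b ^ (p - 1)
        = g (b - τ₀) / b ^ (p - 1) := by
      rw [abs_of_pos (by linarith), Real.sign_of_pos (by linarith), mul_one]
    by_cases haτ : τ₀ < a
    · -- both on the right of τ₀ : use the derivative computation
      have haval : g |a - τ₀| * Real.sign (a - τ₀) / a ^ (p - 1)
          = g (a - τ₀) / a ^ (p - 1) := by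
        rw [abs_of_pos (by linarith), Real.sign_of_pos (by linarith), mul_one]
      rw [haval, hbval]
      exact key haτ hbτ hab
    · -- a ≤ τ₀ < b : value at a is ≤ 0, value at b is ≥ 0
      push_neg at haτ
      have h1 : g |a - τ₀| * Real.sign (a - τ₀) / a ^ (p - 1) ≤ 0 := by
        rcases eq_or_lt_of_le haτ with h | h
        · simp [h, hg0]
        · rw [abs_of_neg (by linarith), Real.sign_of_neg (by linarith)]
          apply div_nonpos_of_nonpos_of_nonneg
          · nlinarith [hgnonneg (-(a - τ₀)) (by linarith)]
          · exact (Real.rpow_pos_of_pos ha _).le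
      have h2 : 0 ≤ g (b - τ₀) / b ^ (p - 1) :=
        div_nonneg (hgnonneg _ (by linarith)) (Real.rpow_pos_of_pos hb _).le
      rw [hbval]
      linarith
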